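/- (Theorem 1, case i=4, finite-group version.) For all (x,u,y,v,z) ∈ A⁵ one has ∑_{x′,u′,y′ ∈ A} T(x,x′) · conj(T(u,u′)) · T(y,y′) · D(x′,u′,y′,z,v) = conj(D(x,u,y,v,z)), where conj denotes complex conjugation. -/

import Mathlib

open Finset

/-- Theorem 1, case `i = 4`, finite-group version: P-symmetry relation
`(T ⊗ T⁻¹ ⊗ T ⊗ σ) D = conj D` written out in coordinates. -/
theorem pachner_P_symmetry_case_four
    {A : Type*} [AddCommGroup A] [Fintype A] [DecidableEq A]
    (g : A → ℂ) (hg_abs : ∀ x, ‖g x‖ = 1) (hg_sym : ∀ x, g (-x) = g x)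
    (χ : A → A → ℂ) (hχ : ∀ x y, χ x y = g x * g y * (g (x + y))⁻¹)
    (hχ_add : ∀ x x' y, χ (x + x') y = χ x y * χ x' y)
    (δ : A → ℂ) (hδ : ∀ a, δ a = if a = 0 then 1 else 0)
    (D : A → A → A → A → A → ℂ)
    (hD : ∀ x u y v z, D x u y v z = χ x z * δ (x - u + y) * δ (y - v + z))
    (T : A → A → ℂ) (hT : ∀ x y, T x y = δ (x + y) * g x) :
    ∀ x u y v z : A,
      ∑ x' : A, ∑ u' : A, ∑ y' : A,
          T x x' * (starRingEnd ℂ) (T u u') * T y y' * D x' u' y' z v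
        = (starRingEnd ℂ) (D x u y v z) := by
  intro x u y v z
  -- basic facts
  have hconj : ∀ w : ℂ, ‖w‖ = 1 → (starRingEnd ℂ) w = w⁻¹ := by
    intro w hw
    rw [Complex.inv_def, Complex.normSq_eq_norm_sq, hw]
    simp
  have hgne : ∀ a : A, g a ≠ 0 := by
    intro a h
    have := hg_abs a
    rw [h] at this
    simp at this
  have hχabs : ∀ a b : A, ‖χ a b‖ = 1 := by
    intro a b
    rw [hχ]
    simp [map_mul, hg_abs]
  have hχne : ∀ a b : A, χ a b ≠ 0 := by
    intro a b h
    have := hχabs a b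
    rw [h] at this
    simp at this
  have hχ00 : χ 0 0 = 1 := by
    have h2 := hχ_add 0 0 0
    rw [zero_add] at h2
    have h3 : χ 0 0 * χ 0 0 = χ 0 0 * 1 := by rw [mul_one]; exact h2.symm
    exact mul_left_cancel₀ (hχne 0 0) h3
  have hg0 : g 0 = 1 := by
    have h1 : χ 0 0 = g 0 := by
      rw [hχ, add_zero, mul_inv_cancel_right₀ (hgne 0)]
    rw [← h1, hχ00]
  -- χ 0 b = 1
  have hχ0 : ∀ b : A, χ 0 b = 1 := by
    intro b
    rw [hχ, hg0, zero_add, one_mul, mul_inv_cancel₀ (hgne b)]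
  -- χ (-a) b = (χ a b)⁻¹
  have hχneg : ∀ a b : A, χ (-a) b = (χ a b)⁻¹ := by
    intro a b
    have h := hχ_add a (-a) b
    rw [add_neg_cancel, hχ0] at h
    exact eq_inv_of_mul_eq_one_right h.symm
  -- χ symmetric
  have hχsymm : ∀ a b : A, χ a b = χ b a := by
    intro a b
    rw [hχ, hχ, add_comm]
    ring
  -- conj χ = χ⁻¹
  have hconjχ : ∀ a b : A, (starRingEnd ℂ) (χ a b) = (χ a b)⁻¹ :=
    fun a b => hconj _ (hχabs a b)
  have hconjg : ∀ a : A, (starRingEnd ℂ) (g a) = (g a)⁻¹ :=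
    fun a => hconj _ (hg_abs a)
  -- T as an if-expression
  have hT' : ∀ a b : A, T a b = if b = -a then g a else 0 := by
    intro a b
    rw [hT, hδ]
    by_cases h : b = -a
    · subst h; simp
    · have : a + b ≠ 0 := fun hc => h (by linear_combination (norm := abel) hc)
      simp [this, h]
  -- collapse the sums
  simp only [hT', apply_ite (starRingEnd ℂ), map_zero, ite_mul, zero_mul, mul_ite, mul_zero,
    Finset.sum_ite_eq', Finset.mem_univ, if_true]
  -- now goal: g x * conj (g u) * g y * D (-x) (-u) (-y) z v = conj (D x u y v z)
  rw [hD, hD, map_mul, map_mul, hconjχ, hconjg]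
  have hδreal : ∀ a : A, (starRingEnd ℂ) (δ a) = δ a := by
    intro a
    rw [hδ]
    split_ifs <;> simp
  rw [hδreal, hδreal]
  have hδneg : ∀ a : A, δ (-a) = δ a := by
    intro a
    rw [hδ, hδ]; simp [neg_eq_zero]
  have hδ1 : δ (-x - -u + -y) = δ (x - u + y) := by
    rw [show -x - -u + -y = -(x - u + y) by abel, hδneg]
  have hδ2 : δ (-y - z + v) = δ (y - v + z) := by
    rw [show -y - z + v = -(y - v + z) by abel, hδneg]
  rw [hδ1, hδ2]
  by_cases h1 : x - u + y = 0
  · by_cases h2 : y - v + z = 0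
    · -- main case: u = x + y, v = y + z
      have hu : u = x + y := by linear_combination (norm := abel) -h1
      have hv : v = y + z := by linear_combination (norm := abel) -h2
      subst hu hv
      have e1 : δ (x - (x + y) + y) = 1 := by
        rw [show x - (x + y) + y = (0 : A) by abel, hδ, if_pos rfl]
      have e2 : δ (y - (y + z) + z) = 1 := by
        rw [show y - (y + z) + z = (0 : A) by abel, hδ, if_pos rfl]
      rw [e1, e2]
      -- goal: g x * (g (x+y))⁻¹ * g y * (χ (-x) (y+z) * 1 * 1) = (χ x z)⁻¹ * 1 * 1
      rw [hχneg]
      have hadd2 : χ x (y + z) = χ x y * χ x z := by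
        rw [hχsymm x (y + z), hχ_add, hχsymm, hχsymm z x]
      rw [hadd2]
      have hxy : g x * (g (x + y))⁻¹ * g y = χ x y := by
        rw [hχ]; ring
      rw [mul_one, mul_one, mul_one, mul_one, mul_inv, hxy, ← mul_assoc,
        mul_inv_cancel₀ (hχne x y), one_mul]
    · simp [hδ, h2]
  · simp [hδ, h1]
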